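/- Let m > 1 be an integer, and index the elements of F(B(2m),m) in ascending order as f₀ < f₁ < f₂ < ⋯ with f₀ = 0/1. Let s and t be the indices with f_s = 1/3 and f_t = 1/2. Then for every integer v with 0 ≤ v ≤ t−s, one has den(f_{s+v}) + den(f_{s−v}) = 3·(num(f_{s+v}) + num(f_{s−v})), where num and den denote numerator and denominator in lowest terms. -/

import Mathlib

/-- The Farey sequence `F_n` of order `n`, viewed as the set of rationals `q`
with `0 ≤ q ≤ 1` whose lowest-terms denominator is at most `n`. -/
def Farey (n : ℕ) : Set ℚ :=
  {q : ℚ | 0 ≤ q ∧ q ≤ 1 ∧ q.den ≤ n}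

/-- The Farey subsequence `F(B(n),m)`: fractions `h/k ∈ F_n` in lowest terms
with `h ≤ m` and `k - h ≤ n - m`. -/
def FareyB (n m : ℕ) : Set ℚ :=
  {q : ℚ | 0 ≤ q ∧ q ≤ 1 ∧ q.den ≤ n ∧ q.num ≤ (m : ℤ) ∧
    (q.den : ℤ) - q.num ≤ (n : ℤ) - (m : ℤ)}

/-- `f'` is the predecessor of `f` in the set `S` of rationals. -/
def IsPredIn (S : Set ℚ) (f' f : ℚ) : Prop :=
  f' ∈ S ∧ f ∈ S ∧ f' < f ∧ ∀ g ∈ S, ¬(f' < g ∧ g < f)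

/-- `f'` is the successor of `f` in the set `S` of rationals. -/
def IsSuccIn (S : Set ℚ) (f f' : ℚ) : Prop :=
  f ∈ S ∧ f' ∈ S ∧ f < f' ∧ ∀ g ∈ S, ¬(f < g ∧ g < f')

noncomputable def sig (q : ℚ) : ℚ := (1 - 2*q) / (2 - 3*q)

lemma half_num_le (q : ℚ) (h2 : q ≤ 1/2) : 2 * q.num ≤ (q.den : ℤ) := by
  have hq : (q.num : ℚ) / q.den = q := q.num_div_den
  have hd : (0:ℚ) < (q.den:ℚ) := by exact_mod_cast q.pos
  have h : (q.num : ℚ) / q.den ≤ 1/2 := by rw [hq]; exact h2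
  rw [div_le_div_iff₀ hd (by norm_num)] at h
  have h' : (2 * q.num : ℚ) ≤ ((q.den : ℤ) : ℚ) := by push_cast; linarith
  exact_mod_cast h'

lemma sig_num_den (q : ℚ) (h0 : 0 ≤ q) (h2 : q ≤ 1/2) :
    (sig q).num = (q.den : ℤ) - 2 * q.num ∧
    ((sig q).den : ℤ) = 2 * (q.den : ℤ) - 3 * q.num := by
  set a : ℤ := (q.den : ℤ) - 2 * q.num with ha
  set b : ℤ := 2 * (q.den : ℤ) - 3 * q.num with hb
  have hnum0 : 0 ≤ q.num := Rat.num_nonneg.mpr h0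
  have hle : 2 * q.num ≤ (q.den : ℤ) := half_num_le q h2
  have hdpos : (0:ℤ) < q.den := by exact_mod_cast q.pos
  have hbpos : 0 < b := by omega
  have hcop : Nat.Coprime a.natAbs b.natAbs := by
    rw [Nat.coprime_iff_gcd_eq_one]
    by_contra h
    obtain ⟨p, hp, hpd⟩ := Nat.exists_prime_and_dvd h
    have hpa : (p:ℤ) ∣ a := Int.natCast_dvd.mpr (hpd.trans (Nat.gcd_dvd_left _ _))
    have hpb : (p:ℤ) ∣ b := Int.natCast_dvd.mpr (hpd.trans (Nat.gcd_dvd_right _ _))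
    have hnum : (p:ℤ) ∣ q.num := by
      have : q.num = b - 2*a := by rw [ha, hb]; ring
      rw [this]; exact dvd_sub hpb (Dvd.dvd.mul_left hpa 2)
    have hden : (p:ℤ) ∣ (q.den:ℤ) := by
      have : (q.den:ℤ) = 2*b - 3*a := by rw [ha, hb]; ring
      rw [this]; exact dvd_sub (Dvd.dvd.mul_left hpb 2) (Dvd.dvd.mul_left hpa 3)
    have h1 : p ∣ Nat.gcd q.num.natAbs q.den :=
      Nat.dvd_gcd (Int.natCast_dvd.mp hnum) (by exact_mod_cast hden)
    rw [q.reduced] at h1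
    exact hp.one_lt.ne' (Nat.dvd_one.mp h1)
  have hne : (2 - 3*q : ℚ) ≠ 0 := by
    intro h; have : q = 2/3 := by linarith
    rw [this] at h2; norm_num at h2
  have hdq : ((q.den:ℚ)) ≠ 0 := by exact_mod_cast hdpos.ne'
  have key : sig q = (a : ℚ) / (b : ℚ) := by
    rw [sig, div_eq_div_iff hne (by exact_mod_cast hbpos.ne')]
    have hnq : (q.num : ℚ) = q * q.den := by
      rw [Rat.mul_den_eq_num]
    rw [ha, hb]; push_cast; rw [hnq]; ring
  rw [key]
  exact ⟨Rat.num_div_eq_of_coprime hbpos hcop, Rat.den_div_eq_of_coprime hbpos hcop⟩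

lemma sig_anti {p q : ℚ} (hpq : p < q) (hq : q ≤ 1/2) : sig q < sig p := by
  have h1 : (0:ℚ) < 2 - 3*p := by linarith
  have h2 : (0:ℚ) < 2 - 3*q := by linarith
  rw [sig, sig, div_lt_div_iff₀ h2 h1]
  nlinarith

lemma sig_nonneg {q : ℚ} (h0 : 0 ≤ q) (h2 : q ≤ 1/2) : 0 ≤ sig q := by
  have : (0:ℚ) < 2 - 3*q := by linarith
  apply div_nonneg (by linarith) this.le

lemma sig_le_half {q : ℚ} (h0 : 0 ≤ q) (h2 : q ≤ 1/2) : sig q ≤ 1/2 := by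
  have h : (0:ℚ) < 2 - 3*q := by linarith
  rw [sig, div_le_div_iff₀ h (by norm_num)]
  linarith

lemma sig_invol {q : ℚ} (h2 : q ≤ 1/2) : sig (sig q) = q := by
  have hne : (2 - 3*q : ℚ) ≠ 0 := by intro h; nlinarith
  have hX : (2 - 3 * sig q : ℚ) = 1/(2-3*q) := by rw [sig]; field_simp; ring
  have hY : (1 - 2 * sig q : ℚ) = q/(2-3*q) := by rw [sig, eq_div_iff hne, sub_mul, mul_assoc, div_mul_cancel₀ _ hne]; ring
  rw [sig, hX, hY]
  field_simp
  exact mul_div_cancel_right₀ q (by intro h; apply hne; linarith)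

lemma sig_mem {m : ℕ} {q : ℚ} (hq : q ∈ FareyB (2*m) m) (h2 : q ≤ 1/2) :
    sig q ∈ FareyB (2*m) m := by
  obtain ⟨h0, h1, hd, hn, hdn⟩ := hq
  obtain ⟨hnum, hden⟩ := sig_num_den q h0 h2
  have hnum0 : 0 ≤ q.num := Rat.num_nonneg.mpr h0
  have hle : 2 * q.num ≤ (q.den : ℤ) := half_num_le q h2
  have hdpos : (0:ℤ) < q.den := by exact_mod_cast q.pos
  refine ⟨sig_nonneg h0 h2, le_trans (sig_le_half h0 h2) (by norm_num), ?_, ?_, ?_⟩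
  · have : ((sig q).den : ℤ) ≤ (2*m : ℤ) := by rw [hden]; push_cast at hd hdn ⊢; omega
    exact_mod_cast this
  · rw [hnum]; push_cast at hdn ⊢; omega
  · rw [hnum, hden]; push_cast at hdn ⊢; omega

theorem stmt_15 (m : ℕ) (hm : 1 < m) (N : ℕ) (f : ℕ → ℚ)
    (henum : ∀ q : ℚ, q ∈ FareyB (2 * m) m ↔ ∃ i ≤ N, f i = q)
    (hmono : ∀ i j : ℕ, i ≤ N → j ≤ N → i < j → f i < f j)
    (hf0 : f 0 = 0)
    (s t : ℕ) (hs : s ≤ N) (hfs : f s = 1 / 3) (ht : t ≤ N) (hft : f t = 1 / 2) :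
    ∀ v : ℕ, v ≤ t - s →
      ((f (s + v)).den : ℤ) + ((f (s - v)).den : ℤ) =
        3 * ((f (s + v)).num + (f (s - v)).num) := by
  have hst : s < t := by
    by_contra h
    push_neg at h
    rcases eq_or_lt_of_le h with h' | h'
    · rw [h', hfs] at hft; norm_num at hft
    · have := hmono t s ht hs h'; rw [hfs, hft] at this; norm_num at this
  have mem_f : ∀ j, j ≤ N → f j ∈ FareyB (2*m) m := by
    intro j hj
    rw [henum]; exact ⟨j, hj, rfl⟩
  have hnn : ∀ j, j ≤ N → 0 ≤ f j := fun j hj => (mem_f j hj).1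
  have hhalf : ∀ j, j ≤ t → f j ≤ 1/2 := by
    intro j hj
    rcases eq_or_lt_of_le hj with h' | h'
    · rw [h', hft]
    · exact le_of_lt (by rw [← hft]; exact hmono j t (hj.trans ht) ht h')
  have between : ∀ i, i + 1 ≤ N → ∀ g ∈ FareyB (2*m) m, ¬(f i < g ∧ g < f (i+1)) := by
    intro i hi g hg ⟨hg1, hg2⟩
    obtain ⟨j, hj, rfl⟩ := (henum g).mp hg
    rcases lt_trichotomy j (i+1) with h' | h' | h'
    · rcases lt_or_eq_of_le (Nat.lt_succ_iff.mp h') with h'' | h''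
      · exact absurd (hmono j i hj (by omega) h'') (by linarith)
      · rw [h''] at hg1; exact lt_irrefl _ hg1
    · rw [h'] at hg2; exact lt_irrefl _ hg2
    · exact absurd (hmono (i+1) j hi hj h') (by linarith)
  have key : ∀ v : ℕ, v ≤ t - s → v ≤ s ∧ f (s - v) = sig (f (s + v)) := by
    intro v
    induction v with
    | zero =>
      intro _
      refine ⟨Nat.zero_le _, ?_⟩
      simp only [Nat.add_zero, Nat.sub_zero, hfs]
      norm_num [sig]
    | succ v ih =>
      intro hv1
      obtain ⟨hvs, heq⟩ := ih (by omega)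
      -- index facts
      have hsv1t : s + v + 1 ≤ t := by omega
      have hsvN : s + v ≤ N := by omega
      have hsv1N : s + v + 1 ≤ N := by omega
      have hsvs : s - v ≤ N := by omega
      -- f (s+v) < 1/2, so sig of it > 0, so s - v > 0
      have hxhalf : f (s + v) ≤ 1/2 := hhalf _ (by omega)
      have hxlt : f (s + v) < 1/2 := by
        rw [← hft]; exact hmono (s+v) t hsvN ht (by omega)
      have hx0 : 0 ≤ f (s + v) := hnn _ hsvN
      have hpos : 0 < f (s - v) := by
        rw [heq]
        have : sig (1/2) = 0 := by norm_num [sig]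
        calc (0:ℚ) = sig (1/2) := this.symm
          _ < sig (f (s+v)) := sig_anti hxlt (by norm_num)
      have hsvpos : 0 < s - v := by
        rcases Nat.eq_zero_or_pos (s - v) with h | h
        · rw [h, hf0] at hpos; exact absurd hpos (lt_irrefl 0)
        · exact h
      have hv1s : v + 1 ≤ s := by omega
      have hidx : s - (v+1) + 1 = s - v := by omega
      -- names
      set p := f (s - (v+1)) with hp
      set c := f (s - v) with hc
      set x := f (s + v) with hx
      set y := f (s + (v+1)) with hy
      have hyidx : s + (v+1) = s + v + 1 := by ring
      have hpc : p < c := by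
        rw [hp, hc, ← hidx]
        exact hmono _ _ (by omega) (by omega) (by omega)
      have hxy : x < y := by
        rw [hx, hy, hyidx]; exact hmono _ _ hsvN hsv1N (by omega)
      have hchalf : c ≤ 1/2 := by rw [heq]; exact sig_le_half hx0 hxhalf
      have hphalf : p ≤ 1/2 := le_trans hpc.le hchalf
      have hp0 : 0 ≤ p := hnn _ (by omega)
      have hyhalf : y ≤ 1/2 := by rw [hy, hyidx]; exact hhalf _ hsv1t
      have hy0 : 0 ≤ y := by rw [hy, hyidx]; exact hnn _ hsv1N
      have hpmem : p ∈ FareyB (2*m) m := mem_f _ (by omega)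
      have hymem : y ∈ FareyB (2*m) m := by rw [hy, hyidx]; exact mem_f _ hsv1N
      have hwmem : sig p ∈ FareyB (2*m) m := sig_mem hpmem hphalf
      have hwhalf : sig p ≤ 1/2 := sig_le_half hp0 hphalf
      have hwx : x < sig p := by
        have h1 : sig c < sig p := sig_anti hpc hchalf
        have h2 : sig c = x := by rw [heq]; exact sig_invol hxhalf
        rw [← h2]; exact h1
      have hwy : sig p = y := by
        rcases lt_trichotomy (sig p) y with h' | h' | h'
        · exfalso
          apply between (s+v) hsv1N (sig p) hwmem
          refine ⟨hwx, ?_⟩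
          show sig p < f (s + v + 1)
          rw [← hyidx]; exact h'
        · exact h'
        · exfalso
          -- y < sig p, apply sig
          have h1 : sig (sig p) < sig y := sig_anti h' hwhalf
          have h2 : sig y < sig x := sig_anti hxy hyhalf
          have h3 : sig (sig p) = p := sig_invol hphalf
          have h4 : sig x = c := by rw [heq]
          apply between (s - (v+1)) (by omega) (sig y) (sig_mem hymem hyhalf)
          rw [hidx]
          refine ⟨?_, ?_⟩
          · show p < sig y
            rw [← h3]; exact h1
          · show sig y < c
            rw [← h4]; exact h2
      refine ⟨hv1s, ?_⟩
      show p = sig y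
      rw [← hwy, sig_invol hphalf]
  intro v hv
  obtain ⟨hvs, heq⟩ := key v hv
  have hx0 : 0 ≤ f (s + v) := hnn _ (by omega)
  have hxhalf : f (s + v) ≤ 1/2 := hhalf _ (by omega)
  obtain ⟨hnum, hden⟩ := sig_num_den (f (s+v)) hx0 hxhalf
  rw [heq, hnum, hden]
  ring
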